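/- The three complex numbers 0, 1 + 2^{−1/2}·e^{(5/12)πi}, and 1 + 2^{−1/2}·e^{(11/12)πi} are collinear in the complex plane; equivalently, arg(1 + 2^{−1/2}e^{5πi/12}) = arg(1 + 2^{−1/2}e^{11πi/12}). -/
import Mathlib


open Real Complex

theorem lafont_collinear :
    Complex.arg (1 + (1 / Real.sqrt 2 : ℝ) * Complex.exp (((5 / 12 : ℝ) * π) * Complex.I)) =
    Complex.arg (1 + (1 / Real.sqrt 2 : ℝ) * Complex.exp (((11 / 12 : ℝ) * π) * Complex.I)) := by
  have h2 : Real.sqrt 2 ^ 2 = 2 := Real.sq_sqrt (by norm_num)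
  have h3 : Real.sqrt 3 ^ 2 = 3 := Real.sq_sqrt (by norm_num)
  have h6 : Real.sqrt 6 = Real.sqrt 2 * Real.sqrt 3 := by
    rw [← Real.sqrt_mul (by norm_num)]; norm_num
  have h2pos : (0:ℝ) < Real.sqrt 2 := Real.sqrt_pos.mpr (by norm_num)
  have h3gt : (1:ℝ) < Real.sqrt 3 := by
    nlinarith [Real.sqrt_nonneg 3]
  have e5 : ((5 / 12 : ℝ) * π) = π / 2 - π / 12 := by ring
  have e11 : ((11 / 12 : ℝ) * π) = π - π / 12 := by ring
  have h12 : (π/12:ℝ) = π/3 - π/4 := by ring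
  have hc : Real.cos (π/12) = (Real.sqrt 6 + Real.sqrt 2)/4 := by
    rw [h12, Real.cos_sub, Real.cos_pi_div_three, Real.sin_pi_div_three,
      Real.cos_pi_div_four, Real.sin_pi_div_four, h6]; ring
  have hs : Real.sin (π/12) = (Real.sqrt 6 - Real.sqrt 2)/4 := by
    rw [h12, Real.sin_sub, Real.cos_pi_div_three, Real.sin_pi_div_three,
      Real.cos_pi_div_four, Real.sin_pi_div_four, h6]; ring
  have key : (1 + (1 / Real.sqrt 2 : ℝ) * Complex.exp (((11 / 12 : ℝ) * π) * Complex.I))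
      = (((Real.sqrt 3 - 1) / (Real.sqrt 3 + 1) : ℝ) : ℂ) *
        (1 + (1 / Real.sqrt 2 : ℝ) * Complex.exp (((5 / 12 : ℝ) * π) * Complex.I)) := by
    rw [Complex.exp_mul_I, Complex.exp_mul_I]
    rw [← Complex.ofReal_mul, ← Complex.ofReal_mul]
    rw [← Complex.ofReal_cos, ← Complex.ofReal_sin, ← Complex.ofReal_cos,
      ← Complex.ofReal_sin]
    rw [e5, e11, Real.cos_pi_sub, Real.sin_pi_sub, Real.cos_pi_div_two_sub,
      Real.sin_pi_div_two_sub, hc, hs]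
    have hne : ((Real.sqrt 3 + 1 : ℝ) : ℂ) ≠ 0 := by
      exact_mod_cast ne_of_gt (by linarith : (0:ℝ) < Real.sqrt 3 + 1)
    rw [Complex.ofReal_div (Real.sqrt 3 - 1) (Real.sqrt 3 + 1), div_mul_eq_mul_div, eq_div_iff hne]
    apply Complex.ext <;> simp <;> rw [h6] <;>
      field_simp <;> nlinarith [h2, h3, h2pos.le, h3gt.le, sq_nonneg (Real.sqrt 2 * Real.sqrt 3)]
  rw [key, Complex.arg_real_mul]
  exact div_pos (by linarith) (by linarith)
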